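/- Explicit Fourier expansion of the projected commutator vector: for every integer l ≥ 0, P g_l = Σ 2^{-(n+m)/4} e_{2^n − 2^m + l}, where the (absolutely convergent) sum is over all pairs (n, m) ∈ ℕ² with 2^m ≥ l + 1 and 2^n ≥ 2^m − l. -/

import Mathlib

set_option maxHeartbeats 1000000


open MeasureTheory

noncomputable section

instance : Fact (0 < 2 * Real.pi) := ⟨by positivity⟩

/-- `L²(S¹)`: the circle of circumference `2π` with its normalized arc-length (Haar)
measure. Its orthonormal Fourier basis is `e_l = fourierLp 2 l`, `l ∈ ℤ`. -/
abbrev CircleL2 : Type := Lp ℂ 2 (@AddCircle.haarAddCircle (2 * Real.pi) _)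

/-- The continuous real-valued Weierstrass-type function
`W(ζ) = Σ_{n≥0} 2^{-n/4}(ζ^{2^n} + ζ^{-2^n})`, as a continuous function on the circle
(the series converges uniformly, i.e. in `C(S¹, ℂ)`). -/
def Wfun : C(AddCircle (2 * Real.pi), ℂ) :=
  ∑' n : ℕ, (((2 : ℝ) ^ (-(n : ℝ) / 4) : ℝ) : ℂ) • (fourier (2 ^ n) + fourier (-(2 ^ n : ℤ)))

/-- The element `W·e_l` of `L²(S¹)`. -/
def WeL2 (l : ℤ) : CircleL2 :=
  ContinuousMap.toLp 2 AddCircle.haarAddCircle ℂ (Wfun * fourier l)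

/-- `P` is the Szegő (Hardy) projection: the (unique) bounded operator fixing `e_n` for
`n ≥ 0` and annihilating `e_n` for `n < 0`. -/
def IsSzegoProjection (P : CircleL2 →L[ℂ] CircleL2) : Prop :=
  ∀ n : ℤ, P (fourierLp 2 n) = if 0 ≤ n then fourierLp 2 n else 0

/-- `MW` is the bounded operator of multiplication by `W`: the (unique) bounded operator
sending (the class of) a continuous function `g` to (the class of) `W·g`. -/
def IsWMultiplication (MW : CircleL2 →L[ℂ] CircleL2) : Prop :=
  ∀ g : C(AddCircle (2 * Real.pi), ℂ),
    MW (ContinuousMap.toLp 2 AddCircle.haarAddCircle ℂ g)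
      = ContinuousMap.toLp 2 AddCircle.haarAddCircle ℂ (Wfun * g)

/-- The commutator vector `g_l := (P M_W − M_W P)(W·e_l)`. -/
def commVec (P MW : CircleL2 →L[ℂ] CircleL2) (l : ℕ) : CircleL2 :=
  P (MW (WeL2 l)) - MW (P (WeL2 l))

/-! ### Auxiliary constructions -/

def toL : C(AddCircle (2 * Real.pi), ℂ) →L[ℂ] CircleL2 :=
  ContinuousMap.toLp 2 AddCircle.haarAddCircle ℂ

def eL (k : ℤ) : CircleL2 := fourierLp 2 k

lemma norm_eL (k : ℤ) : ‖eL k‖ = 1 := orthonormal_fourier.1 k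

def cc (n : ℕ) : ℝ := (2:ℝ) ^ (-(n : ℝ) / 4)

lemma cc_pos (n : ℕ) : 0 < cc n := Real.rpow_pos_of_pos two_pos _

lemma summable_cc : Summable cc := by
  have h : cc = fun n : ℕ => ((2:ℝ) ^ (-(1:ℝ)/4)) ^ n := by
    funext n
    rw [cc, show (-(n:ℝ)/4) = (-(1:ℝ)/4) * n by ring, Real.rpow_mul two_pos.le,
      Real.rpow_natCast]
  rw [h]
  exact summable_geometric_of_lt_one (Real.rpow_pos_of_pos two_pos _).le
    (Real.rpow_lt_one_of_one_lt_of_neg one_lt_two (by norm_num))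

lemma summable_cc2 : Summable (fun p : ℕ × ℕ => cc p.1 * cc p.2) :=
  summable_cc.mul_of_nonneg summable_cc (fun n => (cc_pos n).le) (fun n => (cc_pos n).le)

lemma cc_mul_cc (n m : ℕ) : cc n * cc m = (2:ℝ) ^ (-((n : ℝ) + (m : ℝ)) / 4) := by
  rw [cc, cc, ← Real.rpow_add two_pos]
  congr 1; ring

def wterm (n : ℕ) : C(AddCircle (2 * Real.pi), ℂ) :=
  (((2 : ℝ) ^ (-(n : ℝ) / 4) : ℝ) : ℂ) • (fourier (2 ^ n) + fourier (-(2 ^ n : ℤ)))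

lemma hW : HasSum wterm Wfun := by
  have hs : Summable wterm := by
    apply Summable.of_norm_bounded (summable_cc.mul_right 2)
    intro n
    rw [wterm, norm_smul]
    have h2 : ‖((fourier (2 ^ n) + fourier (-(2 ^ n : ℤ))) : C(AddCircle (2*Real.pi), ℂ))‖ ≤ 2 := by
      refine (norm_add_le _ _).trans ?_
      rw [fourier_norm, fourier_norm]; norm_num
    refine mul_le_mul (le_of_eq ?_) h2 (norm_nonneg _) (cc_pos n).le
    rw [Complex.norm_real, Real.norm_eq_abs]; exact abs_of_pos (cc_pos n)
  exact hs.hasSum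

def mulR (k : ℤ) : C(AddCircle (2*Real.pi), ℂ) →L[ℂ] C(AddCircle (2*Real.pi), ℂ) :=
  (ContinuousLinearMap.mul ℂ _).flip (fourier k)

lemma hMWe {MW : CircleL2 →L[ℂ] CircleL2} (hMW : IsWMultiplication MW) (k : ℤ) :
    HasSum (fun n : ℕ => ((cc n : ℝ) : ℂ) • (eL (2 ^ n + k) + eL (-(2 ^ n : ℤ) + k)))
      (MW (eL k)) := by
  have h1 : HasSum (fun n => toL (mulR k (wterm n))) (toL (mulR k Wfun)) :=
    (hW.mapL (mulR k)).mapL toL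
  have h2 : MW (eL k) = toL (mulR k Wfun) := by
    have := hMW (fourier k)
    exact this
  rw [h2]
  convert h1 using 2 with n
  show _ = toL ((wterm n) * fourier k)
  rw [wterm, smul_mul_assoc, add_mul]
  have e1 : (fourier (2^n) : C(AddCircle (2*Real.pi), ℂ)) * fourier k = fourier (2^n + k) := by
    ext x; simp [fourier_add]
  have e2 : (fourier (-(2^n : ℤ)) : C(AddCircle (2*Real.pi), ℂ)) * fourier k
      = fourier (-(2^n:ℤ) + k) := by
    ext x; simp [fourier_add]
  rw [e1, e2, _root_.map_smul, map_add]
  rfl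

/-! ### The Szegő projection on basis vectors -/

def pe (P : CircleL2 →L[ℂ] CircleL2) (k : ℤ) : CircleL2 := if 0 ≤ k then eL k else 0

lemma P_eL {P : CircleL2 →L[ℂ] CircleL2} (hP : IsSzegoProjection P) (k : ℤ) :
    P (eL k) = pe P k := hP k

lemma P_pe {P : CircleL2 →L[ℂ] CircleL2} (hP : IsSzegoProjection P) (k : ℤ) :
    P (pe P k) = pe P k := by
  rw [pe]; split_ifs with h
  · rw [P_eL hP, pe, if_pos h]
  · exact map_zero P

/-! ### One-variable expansion of `W·e_l` -/

def Aterm (l : ℕ) (n : ℕ) : CircleL2 :=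
  ((cc n : ℝ) : ℂ) • (eL (2 ^ n + l) + eL (-(2 ^ n : ℤ) + l))

lemma hA {MW : CircleL2 →L[ℂ] CircleL2} (hMW : IsWMultiplication MW) (l : ℕ) :
    HasSum (Aterm l) (WeL2 l) := by
  have h := hMWe hMW (l : ℤ)
  have hx : MW (eL l) = WeL2 l := hMW (fourier (l : ℤ))
  rwa [hx] at h

def Bterm (P : CircleL2 →L[ℂ] CircleL2) (l : ℕ) (n : ℕ) : CircleL2 :=
  ((cc n : ℝ) : ℂ) • (eL (2 ^ n + l) + pe P (-(2 ^ n : ℤ) + l))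

lemma hB {P MW : CircleL2 →L[ℂ] CircleL2} (hP : IsSzegoProjection P)
    (hMW : IsWMultiplication MW) (l : ℕ) : HasSum (Bterm P l) (P (WeL2 l)) := by
  have h := (hA hMW l).mapL P
  have he : (fun n => P (Aterm l n)) = Bterm P l := by
    funext n
    rw [Aterm, _root_.map_smul, map_add, P_eL hP, P_eL hP, Bterm]
    have hpos : (0:ℤ) ≤ 2 ^ n + l :=
      add_nonneg (pow_nonneg (by norm_num) n) (Int.natCast_nonneg l)
    rw [pe, if_pos hpos]
  rwa [he] at h

/-! ### Two-variable expansions -/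

def Fterm (l : ℕ) (p : ℕ × ℕ) : CircleL2 :=
  ((cc p.1 : ℝ) : ℂ) •
    (((cc p.2 : ℝ) : ℂ) •
        (eL (2 ^ p.2 + (2 ^ p.1 + l)) + eL (-(2 ^ p.2 : ℤ) + (2 ^ p.1 + l)))
      + ((cc p.2 : ℝ) : ℂ) •
        (eL (2 ^ p.2 + (-(2 ^ p.1 : ℤ) + l)) + eL (-(2 ^ p.2 : ℤ) + (-(2 ^ p.1 : ℤ) + l))))

def Gterm (P : CircleL2 →L[ℂ] CircleL2) (l : ℕ) (p : ℕ × ℕ) : CircleL2 :=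
  ((cc p.1 : ℝ) : ℂ) •
    (((cc p.2 : ℝ) : ℂ) •
        (eL (2 ^ p.2 + (2 ^ p.1 + l)) + eL (-(2 ^ p.2 : ℤ) + (2 ^ p.1 + l)))
      + (if (0:ℤ) ≤ -(2 ^ p.1 : ℤ) + l then
          ((cc p.2 : ℝ) : ℂ) •
            (eL (2 ^ p.2 + (-(2 ^ p.1 : ℤ) + l)) + eL (-(2 ^ p.2 : ℤ) + (-(2 ^ p.1 : ℤ) + l)))
        else 0))

lemma norm_pair (r : ℝ) (hr : 0 < r) (a b : ℤ) : ‖((r : ℝ) : ℂ) • (eL a + eL b)‖ ≤ r * 2 := by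
  rw [norm_smul, Complex.norm_real, Real.norm_eq_abs, abs_of_pos hr]
  refine mul_le_mul_of_nonneg_left ?_ hr.le
  refine (norm_add_le _ _).trans ?_
  rw [norm_eL, norm_eL]; norm_num

lemma norm_Fterm (l : ℕ) (p : ℕ × ℕ) : ‖Fterm l p‖ ≤ cc p.1 * cc p.2 * 4 := by
  rw [Fterm, norm_smul, Complex.norm_real, Real.norm_eq_abs, abs_of_pos (cc_pos p.1),
    show cc p.1 * cc p.2 * 4 = cc p.1 * (cc p.2 * 2 + cc p.2 * 2) by ring]
  refine mul_le_mul_of_nonneg_left ?_ (cc_pos p.1).le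
  exact (norm_add_le _ _).trans
    (add_le_add (norm_pair _ (cc_pos p.2) _ _) (norm_pair _ (cc_pos p.2) _ _))

lemma norm_Gterm (P : CircleL2 →L[ℂ] CircleL2) (l : ℕ) (p : ℕ × ℕ) :
    ‖Gterm P l p‖ ≤ cc p.1 * cc p.2 * 4 := by
  rw [Gterm, norm_smul, Complex.norm_real, Real.norm_eq_abs, abs_of_pos (cc_pos p.1)]
  have hite : ‖(if (0:ℤ) ≤ -(2 ^ p.1 : ℤ) + l then
      ((cc p.2 : ℝ) : ℂ) •
        (eL (2 ^ p.2 + (-(2 ^ p.1 : ℤ) + l)) + eL (-(2 ^ p.2 : ℤ) + (-(2 ^ p.1 : ℤ) + l)))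
      else 0)‖ ≤ cc p.2 * 2 := by
    split_ifs
    · exact norm_pair (cc p.2) (cc_pos p.2) _ _
    · rw [norm_zero]; nlinarith [cc_pos p.2]
  rw [show cc p.1 * cc p.2 * 4 = cc p.1 * (cc p.2 * 2 + cc p.2 * 2) by ring]
  refine mul_le_mul_of_nonneg_left ?_ (cc_pos p.1).le
  exact (norm_add_le _ _).trans (add_le_add (norm_pair _ (cc_pos p.2) _ _) hite)

lemma summable_Fterm (l : ℕ) : Summable (Fterm l) :=
  Summable.of_norm_bounded (summable_cc2.mul_right 4) (norm_Fterm l)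

lemma summable_Gterm (P : CircleL2 →L[ℂ] CircleL2) (l : ℕ) : Summable (Gterm P l) :=
  Summable.of_norm_bounded (summable_cc2.mul_right 4) (norm_Gterm P l)

lemma hFn {MW : CircleL2 →L[ℂ] CircleL2} (hMW : IsWMultiplication MW) (l : ℕ) (n : ℕ) :
    HasSum (fun m => Fterm l (n, m)) (MW (Aterm l n)) := by
  rw [Aterm, MW.map_smul, MW.map_add]
  exact ((hMWe hMW ((2:ℤ) ^ n + l)).add (hMWe hMW (-(2 ^ n : ℤ) + l))).const_smul _

lemma hGn {P MW : CircleL2 →L[ℂ] CircleL2} (hMW : IsWMultiplication MW) (l : ℕ) (n : ℕ) :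
    HasSum (fun m => Gterm P l (n, m)) (MW (Bterm P l n)) := by
  rw [Bterm, MW.map_smul, MW.map_add]
  refine HasSum.const_smul _ ((hMWe hMW ((2:ℤ) ^ n + l)).add ?_)
  by_cases h : (0:ℤ) ≤ -(2 ^ n : ℤ) + l
  · simp only [if_pos h]
    rw [pe, if_pos h]
    exact hMWe hMW _
  · simp only [if_neg h]
    rw [pe, if_neg h, map_zero]
    exact hasSum_zero

lemma hF {MW : CircleL2 →L[ℂ] CircleL2} (hMW : IsWMultiplication MW) (l : ℕ) :
    HasSum (Fterm l) (MW (WeL2 l)) := by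
  have h0 : HasSum (fun n => MW (Aterm l n)) (MW (WeL2 l)) := (hA hMW l).mapL MW
  have ht : HasSum (Fterm l) (∑' p, Fterm l p) := (summable_Fterm l).hasSum
  rwa [Summable.tsum_prod' (summable_Fterm l) (fun n => (hFn hMW l n).summable),
    tsum_congr (fun n => (hFn hMW l n).tsum_eq), h0.tsum_eq] at ht

lemma hG {P MW : CircleL2 →L[ℂ] CircleL2} (hP : IsSzegoProjection P)
    (hMW : IsWMultiplication MW) (l : ℕ) : HasSum (Gterm P l) (MW (P (WeL2 l))) := by
  have h0 : HasSum (fun n => MW (Bterm P l n)) (MW (P (WeL2 l))) := (hB hP hMW l).mapL MW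
  have ht : HasSum (Gterm P l) (∑' p, Gterm P l p) := (summable_Gterm P l).hasSum
  rwa [Summable.tsum_prod' (summable_Gterm P l) (fun n => (hGn hMW l n).summable),
    tsum_congr (fun n => (hGn hMW l n).tsum_eq), h0.tsum_eq] at ht

/-! ### Projections of the two-variable terms -/

lemma PF_eq {P : CircleL2 →L[ℂ] CircleL2} (hP : IsSzegoProjection P) (l : ℕ) (p : ℕ × ℕ) :
    P (Fterm l p) =
      ((cc p.1 : ℝ) : ℂ) •
        (((cc p.2 : ℝ) : ℂ) •
            (pe P (2 ^ p.2 + (2 ^ p.1 + l)) + pe P (-(2 ^ p.2 : ℤ) + (2 ^ p.1 + l)))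
          + ((cc p.2 : ℝ) : ℂ) •
            (pe P (2 ^ p.2 + (-(2 ^ p.1 : ℤ) + l))
              + pe P (-(2 ^ p.2 : ℤ) + (-(2 ^ p.1 : ℤ) + l)))) := by
  rw [Fterm]
  simp only [_root_.map_smul, map_add, P_eL hP]

lemma PG_eq {P : CircleL2 →L[ℂ] CircleL2} (hP : IsSzegoProjection P) (l : ℕ) (p : ℕ × ℕ) :
    P (Gterm P l p) =
      ((cc p.1 : ℝ) : ℂ) •
        (((cc p.2 : ℝ) : ℂ) •
            (pe P (2 ^ p.2 + (2 ^ p.1 + l)) + pe P (-(2 ^ p.2 : ℤ) + (2 ^ p.1 + l)))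
          + (if (0:ℤ) ≤ -(2 ^ p.1 : ℤ) + l then
              ((cc p.2 : ℝ) : ℂ) •
                (pe P (2 ^ p.2 + (-(2 ^ p.1 : ℤ) + l))
                  + pe P (-(2 ^ p.2 : ℤ) + (-(2 ^ p.1 : ℤ) + l)))
            else 0)) := by
  rw [Gterm]
  simp only [_root_.map_smul, map_add, apply_ite P, map_zero, P_eL hP]

lemma PPF {P : CircleL2 →L[ℂ] CircleL2} (hP : IsSzegoProjection P) (l : ℕ) (p : ℕ × ℕ) :
    P (P (Fterm l p)) = P (Fterm l p) := by
  rw [PF_eq hP l p]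
  simp only [_root_.map_smul, map_add, P_pe hP]

lemma PPG {P : CircleL2 →L[ℂ] CircleL2} (hP : IsSzegoProjection P) (l : ℕ) (p : ℕ × ℕ) :
    P (P (Gterm P l p)) = P (Gterm P l p) := by
  rw [PG_eq hP l p]
  simp only [_root_.map_smul, map_add, apply_ite P, map_zero, P_pe hP]

/-! ### The limit term -/

def Hterm (l : ℕ) (q : ℕ × ℕ) : CircleL2 :=
  if ((l : ℤ) + 1 ≤ 2 ^ q.2 ∧ (2 : ℤ) ^ q.2 - l ≤ 2 ^ q.1) then
    (((2 : ℝ) ^ (-((q.1 : ℝ) + (q.2 : ℝ)) / 4) : ℝ) : ℂ) • eL ((2 : ℤ) ^ q.1 - 2 ^ q.2 + l)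
  else 0

lemma D_eq {P : CircleL2 →L[ℂ] CircleL2} (hP : IsSzegoProjection P) (l : ℕ) (p : ℕ × ℕ) :
    P (Fterm l p) - P (Gterm P l p) = Hterm l p.swap := by
  rw [PF_eq hP l p, PG_eq hP l p, ← smul_sub, add_sub_add_left_eq_sub]
  have hpow1 : (0:ℤ) < 2 ^ p.1 := by positivity
  have hpow2 : (0:ℤ) < 2 ^ p.2 := by positivity
  by_cases h : (0:ℤ) ≤ -(2 ^ p.1 : ℤ) + l
  · rw [if_pos h, sub_self, smul_zero, Hterm, if_neg]
    rintro ⟨h1, -⟩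
    simp only [Prod.snd_swap] at h1
    omega
  · rw [if_neg h, sub_zero]
    have hneg : ¬ (0:ℤ) ≤ -(2 ^ p.2 : ℤ) + (-(2 ^ p.1 : ℤ) + l) := by
      push_neg at h ⊢; linarith
    simp only [pe]
    rw [if_neg hneg, add_zero]
    by_cases h1 : (0:ℤ) ≤ 2 ^ p.2 + (-(2 ^ p.1 : ℤ) + l)
    · rw [if_pos h1, Hterm, if_pos]
      · rw [smul_smul, ← Complex.ofReal_mul, cc_mul_cc]
        congr 2
        · simp only [Prod.fst_swap, Prod.snd_swap]
          ring
        · simp only [Prod.fst_swap, Prod.snd_swap]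
          ring
      · constructor
        · simp only [Prod.snd_swap]; omega
        · simp only [Prod.fst_swap, Prod.snd_swap]; omega
    · rw [if_neg h1, smul_zero, smul_zero, Hterm, if_neg]
      rintro ⟨-, h2⟩
      simp only [Prod.fst_swap, Prod.snd_swap] at h2
      omega


/-- Explicit Fourier expansion of the projected commutator vector: for
every integer `l ≥ 0`, `P g_l = Σ 2^{-(n+m)/4} e_{2^n − 2^m + l}`, the (absolutely
convergent) sum ranging over all pairs `(n, m) ∈ ℕ²` with `2^m ≥ l + 1` and
`2^n ≥ 2^m − l`. -/
theorem statement16 (P MW : CircleL2 →L[ℂ] CircleL2)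
    (hP : IsSzegoProjection P) (hMW : IsWMultiplication MW) (l : ℕ) :
    Summable (fun p : {p : ℕ × ℕ // (l : ℤ) + 1 ≤ 2 ^ p.2 ∧ (2 : ℤ) ^ p.2 - l ≤ 2 ^ p.1} =>
      ‖((((2 : ℝ) ^ (-((p.1.1 : ℝ) + (p.1.2 : ℝ)) / 4) : ℝ) : ℂ)
        • fourierLp 2 ((2 : ℤ) ^ p.1.1 - 2 ^ p.1.2 + l) : CircleL2)‖) ∧
    HasSum (fun p : {p : ℕ × ℕ // (l : ℤ) + 1 ≤ 2 ^ p.2 ∧ (2 : ℤ) ^ p.2 - l ≤ 2 ^ p.1} =>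
      (((2 : ℝ) ^ (-((p.1.1 : ℝ) + (p.1.2 : ℝ)) / 4) : ℝ) : ℂ)
        • fourierLp 2 ((2 : ℤ) ^ p.1.1 - 2 ^ p.1.2 + l))
      (P (commVec P MW l)) := by
  constructor
  · refine (summable_cc2.subtype _).congr ?_
    intro p
    rw [norm_smul, Complex.norm_real, Real.norm_eq_abs, ← cc_mul_cc,
      abs_of_pos (mul_pos (cc_pos _) (cc_pos _))]
    show cc p.1.1 * cc p.1.2 = cc p.1.1 * cc p.1.2 * ‖eL _‖
    rw [norm_eL, mul_one]
  · -- the HasSum part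
    have hPF : HasSum (fun p => P (Fterm l p)) (P (MW (WeL2 l))) := (hF hMW l).mapL P
    have hPPF : HasSum (fun p => P (Fterm l p)) (P (P (MW (WeL2 l)))) := by
      have h := hPF.mapL P
      rwa [show (fun p => P (P (Fterm l p))) = fun p => P (Fterm l p) from
        funext (PPF hP l)] at h
    have hPG : HasSum (fun p => P (Gterm P l p)) (P (MW (P (WeL2 l)))) := (hG hP hMW l).mapL P
    have hD : HasSum (fun p : ℕ × ℕ => Hterm l p.swap) (P (commVec P MW l)) := by
      have h := hPPF.sub hPG
      rw [show (fun p => P (Fterm l p) - P (Gterm P l p)) = fun p : ℕ × ℕ => Hterm l p.swap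
        from funext (D_eq hP l)] at h
      have hc : P (commVec P MW l) = P (P (MW (WeL2 l))) - P (MW (P (WeL2 l))) := by
        rw [commVec, map_sub]
      rw [hc]
      exact h
    have hH : HasSum (Hterm l) (P (commVec P MW l)) :=
      (Equiv.prodComm ℕ ℕ).hasSum_iff.mp hD
    have hsupp : Function.support (Hterm l) ⊆
        {q : ℕ × ℕ | (l : ℤ) + 1 ≤ 2 ^ q.2 ∧ (2 : ℤ) ^ q.2 - l ≤ 2 ^ q.1} := by
      intro q hq
      by_contra hc
      apply hq
      rw [Hterm]
      exact if_neg hc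
    have hsub := (hasSum_subtype_iff_of_support_subset hsupp).mpr hH
    have hfe : ((Hterm l) ∘ ((↑) : {q : ℕ × ℕ | (l : ℤ) + 1 ≤ 2 ^ q.2 ∧ (2 : ℤ) ^ q.2 - l ≤ 2 ^ q.1} → ℕ × ℕ)) =
        (fun p : {p : ℕ × ℕ // (l : ℤ) + 1 ≤ 2 ^ p.2 ∧ (2 : ℤ) ^ p.2 - l ≤ 2 ^ p.1} =>
          (((2 : ℝ) ^ (-((p.1.1 : ℝ) + (p.1.2 : ℝ)) / 4) : ℝ) : ℂ)
            • fourierLp 2 ((2 : ℤ) ^ p.1.1 - 2 ^ p.1.2 + l)) := by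
      funext p
      show Hterm l p.1 = _
      rw [Hterm]
      exact if_pos p.2
    rwa [hfe] at hsub
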